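/- Let M be a polycyclic complete DFA over a finite alphabet Σ with state set P of cardinality m, and for each state p let u_p ∈ Σ* be a word with Loop_M(p) ⊆ {u_p}*. Then every word w ∈ L(M) can be written as w = u_{p_1}^{n_1} · v_1 · u_{p_2}^{n_2} · v_2 ⋯ v_{m−1} · u_{p_m}^{n_m} for some states p_1, …, p_m ∈ P, natural numbers n_1, …, n_m ∈ ℕ, and words v_1, …, v_{m−1} ∈ Σ* each of length strictly less than m. -/

import Mathlib

/-- The `n`-fold concatenation power of a word `u`. -/
def wordPow {α : Type*} (u : List α) : ℕ → List α
  | 0 => []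
  | n + 1 => u ++ wordPow u n


private def blockify {α σ : Type*} (u : σ → List α) (x : σ × ℕ × List α) : List α :=
  wordPow (u x.1) x.2.1 ++ x.2.2

private lemma flatten_replicate_nil {α : Type*} (k : ℕ) :
    (List.replicate k ([] : List α)).flatten = [] := by
  induction k with
  | zero => rfl
  | succ k ih => simp [List.replicate_succ, ih]

private lemma key {α : Type*} {σ : Type*} [Fintype σ] (M : DFA α σ) (u : σ → List α)
    (hpoly : ∀ p : σ,
        {w : List α | M.evalFrom p w = p} ⊆ {w : List α | ∃ k : ℕ, w = wordPow (u p) k}) :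
    ∀ N (w : List α), w.length ≤ N → ∀ q : σ, ∃ L : List (σ × ℕ × List α),
      L ≠ [] ∧
      (L.map Prod.fst).Nodup ∧
      (∀ x ∈ L, x.2.2.length < Fintype.card σ) ∧
      (∀ x ∈ L.getLast?, x.2.2 = ([] : List α)) ∧
      (∀ x ∈ L, ∃ i ≤ w.length, x.1 = M.evalFrom q (w.take i)) ∧
      w = (L.map (blockify u)).flatten := by
  intro N
  induction N with
  | zero =>
    intro w hw q
    have hw0 : w = [] := List.length_eq_zero_iff.mp (Nat.le_zero.mp hw)
    refine ⟨[(q, 0, [])], by simp, by simp, ?_, by simp, ?_, ?_⟩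
    · intro x hx; simp at hx; subst hx
      simpa using Fintype.card_pos_iff.mpr ⟨q⟩
    · intro x hx; simp at hx; exact ⟨0, by simp [hx, hw0]⟩
    · simp [hw0, blockify, wordPow]
  | succ N ih =>
    intro w hw q
    classical
    have hcard : 0 < Fintype.card σ := Fintype.card_pos_iff.mpr ⟨q⟩
    set T : Finset ℕ := (Finset.range (w.length + 1)).filter
      (fun i => M.evalFrom q (w.take i) = q) with hT
    have hT0 : 0 ∈ T := by simp [hT]
    set b : ℕ := T.max' ⟨0, hT0⟩ with hbdef
    have hbmem : b ∈ T := T.max'_mem _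
    have hble : b ≤ w.length := by
      have := (Finset.mem_filter.mp hbmem).1
      simpa [Nat.lt_succ_iff] using this
    have hloop : M.evalFrom q (w.take b) = q := (Finset.mem_filter.mp hbmem).2
    have hmax : ∀ k, k ≤ w.length → M.evalFrom q (w.take k) = q → k ≤ b := by
      intro k hk hkq
      exact T.le_max' k (by simp [hT, Nat.lt_succ_iff, hk, hkq])
    obtain ⟨n₁, hn₁⟩ := hpoly q hloop
    rcases le_or_gt w.length b with hcase | hcase
    · -- w = w.take b
      have hwb : w.take b = w := List.take_of_length_le hcase
      refine ⟨[(q, n₁, [])], by simp, by simp, ?_, ?_, ?_, ?_⟩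
      · intro x hx; simp at hx; subst hx; simpa using hcard
      · intro x hx; simp at hx; subst hx; rfl
      · intro x hx; simp at hx; exact ⟨0, by simp [hx]⟩
      · simp [blockify, ← hn₁, hwb]
    · -- proper suffix remains
      set m := Fintype.card σ with hm
      have hs₁ : M.evalFrom q (w.take (b + 1)) ≠ q := by
        intro h
        have := hmax (b + 1) (by omega) h
        omega
      have hm2 : 2 ≤ m := by
        have : 1 < Fintype.card σ := Fintype.one_lt_card_iff.mpr
          ⟨M.evalFrom q (w.take (b + 1)), q, hs₁⟩
        omega
      set j : ℕ := min (w.length - b) (m - 1) with hjdef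
      have hj1 : 1 ≤ j := by omega
      have hjm : j ≤ m - 1 := by omega
      have hjb : b + j ≤ w.length := by omega
      set q' : σ := M.evalFrom q (w.take (b + j)) with hq'
      have hdroplen : (w.drop (b + j)).length ≤ N := by
        simp only [List.length_drop]; omega
      obtain ⟨L', hL'ne, hL'nd, hL'v, hL'last, hL'heads, hL'eq⟩ :=
        ih (w.drop (b + j)) hdroplen q'
      -- a key identity
      have hsplit : ∀ i, w.take (b + j + i) = w.take (b + j) ++ (w.drop (b + j)).take i := by
        intro i; exact List.take_add (l := w) (i := b + j) (j := i)
      have heval : ∀ i, M.evalFrom q' ((w.drop (b + j)).take i)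
          = M.evalFrom q (w.take (b + j + i)) := by
        intro i
        rw [hsplit i, M.evalFrom_of_append, hq']
      have hheadsne : ∀ x ∈ L', x.1 ≠ q := by
        intro x hx hxq
        obtain ⟨i, hi, hxi⟩ := hL'heads x hx
        have hile : b + j + i ≤ w.length := by
          simp only [List.length_drop] at hi; omega
        have : M.evalFrom q (w.take (b + j + i)) = q := by
          rw [← heval i, ← hxi, hxq]
        have := hmax _ hile this
        omega
      refine ⟨(q, n₁, (w.drop b).take j) :: L', by simp, ?_, ?_, ?_, ?_, ?_⟩
      · simp only [List.map_cons, List.nodup_cons]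
        refine ⟨?_, hL'nd⟩
        intro hqmem
        obtain ⟨x, hx, hxq⟩ := List.mem_map.mp hqmem
        exact hheadsne x hx hxq
      · intro x hx
        rcases List.mem_cons.mp hx with h | h
        · subst h
          simp only [List.length_take, List.length_drop]
          omega
        · exact hL'v x h
      · -- getLast?
        obtain ⟨a, t, rfl⟩ := List.exists_cons_of_ne_nil hL'ne
        rw [List.getLast?_cons_cons]
        exact hL'last
      · intro x hx
        rcases List.mem_cons.mp hx with h | h
        · subst h; exact ⟨0, by simp⟩
        · obtain ⟨i, hi, hxi⟩ := hL'heads x h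
          have hile : b + j + i ≤ w.length := by
            simp only [List.length_drop] at hi; omega
          exact ⟨b + j + i, hile, by rw [hxi, heval i]⟩
      · -- the factorization equation
        have hw1 : w = w.take b ++ ((w.drop b).take j ++ (w.drop b).drop j) := by
          rw [List.take_append_drop, List.take_append_drop]
        have hdd : (w.drop b).drop j = w.drop (b + j) := by
          rw [List.drop_drop]
        calc w = w.take b ++ ((w.drop b).take j ++ (w.drop b).drop j) := hw1
          _ = wordPow (u q) n₁ ++ ((w.drop b).take j ++ (w.drop (b + j))) := by
              rw [← hn₁, hdd]
          _ = (((q, n₁, (w.drop b).take j) :: L').map (blockify u)).flatten := by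
              simp [blockify, hL'eq, List.append_assoc]

/-- Let `M` be a polycyclic complete DFA with `m` states, with a
word `u p` for each state `p` such that every loop word at `p` is a power of
`u p`. Then every accepted word `w` factors as
`u_{p_1}^{n_1} · v_1 · u_{p_2}^{n_2} · v_2 ⋯ v_{m−1} · u_{p_m}^{n_m}` where each
`v_i` has length `< m` (the last separator is forced to be empty, so that there
are exactly `m` power-blocks and `m − 1` separators). -/
theorem stmt_16 {α : Type*} [Fintype α] {σ : Type*} [Fintype σ] (M : DFA α σ)
    (u : σ → List α)
    (hpoly : ∀ p : σ,
        {w : List α | M.evalFrom p w = p} ⊆ {w : List α | ∃ k : ℕ, w = wordPow (u p) k})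
    (w : List α) (hw : w ∈ M.accepts) :
    ∃ (p : Fin (Fintype.card σ) → σ) (n : Fin (Fintype.card σ) → ℕ)
      (v : Fin (Fintype.card σ) → List α),
      (∀ i, (v i).length < Fintype.card σ) ∧
      v ⟨Fintype.card σ - 1,
          Nat.sub_lt (Fintype.card_pos_iff.mpr ⟨M.start⟩) Nat.one_pos⟩ = [] ∧
      w = (List.ofFn (fun i => wordPow (u (p i)) (n i) ++ v i)).flatten := by
  classical
  obtain ⟨L, hLne, hLnd, hLv, hLlast, _, hLeq⟩ :=
    key M u hpoly w.length w le_rfl M.start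
  set m := Fintype.card σ with hm
  have hcard : 0 < m := Fintype.card_pos_iff.mpr ⟨M.start⟩
  have hLlen : L.length ≤ m := by
    have := hLnd.length_le_card
    simpa using this
  set a : σ × ℕ × List α := (M.start, 0, []) with ha
  set L₂ : List (σ × ℕ × List α) := L ++ List.replicate (m - L.length) a with hL₂
  have hL₂len : L₂.length = m := by
    simp only [hL₂, List.length_append, List.length_replicate]
    omega
  set f : Fin m → σ × ℕ × List α :=
    fun i => L₂[(i : ℕ)]'(by rw [hL₂len]; exact i.2) with hf
  refine ⟨fun i => (f i).1, fun i => (f i).2.1, fun i => (f i).2.2, ?_, ?_, ?_⟩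
  · intro i
    show (f i).2.2.length < Fintype.card σ
    have hmem : f i ∈ L₂ := List.getElem_mem _
    rcases List.mem_append.mp hmem with h | h
    · exact hLv _ h
    · have h2 := List.eq_of_mem_replicate h
      rw [h2, ha]
      exact hcard
  · -- last separator is empty
    have hgl : L₂.getLast? = some (f ⟨m - 1, Nat.sub_lt hcard Nat.one_pos⟩) := by
      have hL₂ne : L₂ ≠ [] := by
        intro h; rw [h] at hL₂len; simp at hL₂len; omega
      rw [List.getLast?_eq_getElem?, List.getElem?_eq_getElem (by omega)]
      simp only [hf, hL₂len]
    show (f ⟨m - 1, Nat.sub_lt hcard Nat.one_pos⟩).2.2 = []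
    rcases Nat.eq_zero_or_pos (m - L.length) with hk | hk
    · have hLL : L₂ = L := by simp [hL₂, hk]
      rw [hLL] at hgl
      exact hLlast _ (by rw [hgl]; rfl)
    · have hrep : List.replicate (m - L.length) a
          = List.replicate (m - L.length - 1) a ++ [a] := by
        conv_lhs => rw [show m - L.length = (m - L.length - 1) + 1 by omega]
        rw [List.replicate_succ']
      have : L₂.getLast? = some a := by
        rw [hL₂, hrep, ← List.append_assoc, List.getLast?_concat]
      rw [this] at hgl
      have h3 : a = f ⟨m - 1, Nat.sub_lt hcard Nat.one_pos⟩ :=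
        Option.some.inj hgl
      rw [← h3, ha]
  · have hofn : List.ofFn f = L₂ := by
      apply List.ext_getElem
      · simp [hL₂len]
      · intro i h1 h2
        simp [hf]
    have hblock : (fun i => wordPow (u ((f i).1)) ((f i).2.1) ++ (f i).2.2)
        = blockify u ∘ f := rfl
    rw [hblock, ← List.map_ofFn, hofn, hL₂, List.map_append, List.flatten_append,
      ← hLeq, List.map_replicate]
    have : blockify u a = [] := by simp [blockify, ha, wordPow]
    rw [this, flatten_replicate_nil, List.append_nil]
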